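/- Let A₁ ∈ ℂ^{m×n}, b₁ ∈ ℂ^m, A₂ ∈ ℂ^{k×n} with rank(A₂) = k ≥ 1, b₂ ∈ ℂ^k, and set ξ := A₁†b₁ + (I − (A₁(I − A₂†A₂))†A₁)(A₂†b₂ − A₁†b₁). Then ξ minimizes ‖A₁x − b₁‖² over all x ∈ ℂ^n satisfying A₂x = b₂, and for every other minimizer x of this constrained problem one has ‖ξ‖ ≤ ‖x‖; that is, ξ is the constrained least squares solution of smallest Euclidean norm. -/

import Mathlib

open Matrix

/-- The four Penrose conditions characterizing the Moore-Penrose inverse. -/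
def IsMoorePenrose {m n : ℕ} (A : Matrix (Fin m) (Fin n) ℂ)
    (X : Matrix (Fin n) (Fin m) ℂ) : Prop :=
  A * X * A = A ∧ X * A * X = X ∧ (A * X)ᴴ = A * X ∧ (X * A)ᴴ = X * A

/-- The range (column space) of a matrix, as a subspace of Euclidean space. -/
noncomputable def mrange {m n : ℕ} (A : Matrix (Fin m) (Fin n) ℂ) :
    Submodule ℂ (EuclideanSpace ℂ (Fin m)) :=
  LinearMap.range (Matrix.toEuclideanLin A)

/-- The null space of a matrix, as a subspace of Euclidean space. -/
noncomputable def mker {m n : ℕ} (A : Matrix (Fin m) (Fin n) ℂ) :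
    Submodule ℂ (EuclideanSpace ℂ (Fin n)) :=
  LinearMap.ker (Matrix.toEuclideanLin A)

open scoped InnerProductSpace

/-- `M *ᵥ v` as an operation on Euclidean space. -/
noncomputable def mve {p q : ℕ} (M : Matrix (Fin p) (Fin q) ℂ) (v : EuclideanSpace ℂ (Fin q)) :
    EuclideanSpace ℂ (Fin p) := WithLp.toLp 2 (M *ᵥ WithLp.ofLp v)

lemma tEL {p q : ℕ} (M : Matrix (Fin p) (Fin q) ℂ) (v : EuclideanSpace ℂ (Fin q)) :
    Matrix.toEuclideanLin M v = mve M v := rfl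

lemma mve_mul {p q r : ℕ} (M : Matrix (Fin p) (Fin q) ℂ) (N : Matrix (Fin q) (Fin r) ℂ)
    (v : EuclideanSpace ℂ (Fin r)) : mve (M * N) v = mve M (mve N v) := by
  show WithLp.toLp 2 ((M * N) *ᵥ WithLp.ofLp v) = WithLp.toLp 2 (M *ᵥ (N *ᵥ WithLp.ofLp v))
  rw [Matrix.mulVec_mulVec]

lemma mve_one {p : ℕ} (v : EuclideanSpace ℂ (Fin p)) : mve 1 v = v := by simp [mve]

lemma mve_zero {p q : ℕ} (v : EuclideanSpace ℂ (Fin q)) :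
    mve (0 : Matrix (Fin p) (Fin q) ℂ) v = 0 := by simp [mve]

lemma mve_v_zero {p q : ℕ} (M : Matrix (Fin p) (Fin q) ℂ) :
    mve M (0 : EuclideanSpace ℂ (Fin q)) = 0 := by simp [mve]

lemma mve_add {p q : ℕ} (M : Matrix (Fin p) (Fin q) ℂ) (u v : EuclideanSpace ℂ (Fin q)) :
    mve M (u + v) = mve M u + mve M v := by simp [mve, Matrix.mulVec_add]

lemma mve_sub {p q : ℕ} (M : Matrix (Fin p) (Fin q) ℂ) (u v : EuclideanSpace ℂ (Fin q)) :
    mve M (u - v) = mve M u - mve M v := by simp [mve, Matrix.mulVec_sub]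

lemma add_mve {p q : ℕ} (M N : Matrix (Fin p) (Fin q) ℂ) (v : EuclideanSpace ℂ (Fin q)) :
    mve (M + N) v = mve M v + mve N v := by simp [mve, Matrix.add_mulVec]

lemma sub_mve {p q : ℕ} (M N : Matrix (Fin p) (Fin q) ℂ) (v : EuclideanSpace ℂ (Fin q)) :
    mve (M - N) v = mve M v - mve N v := by simp [mve, Matrix.sub_mulVec]

lemma inner_mve {p q : ℕ} (M : Matrix (Fin p) (Fin q) ℂ) (x : EuclideanSpace ℂ (Fin q))
    (y : EuclideanSpace ℂ (Fin p)) : ⟪mve M x, y⟫_ℂ = ⟪x, mve Mᴴ y⟫_ℂ := by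
  rw [← tEL, ← tEL, Matrix.toEuclideanLin_conjTranspose_eq_adjoint, LinearMap.adjoint_inner_right]

/-- A matrix of full row rank has a right inverse property w.r.t. any Moore-Penrose inverse. -/
lemma full_row_rank_right_inv {k n : ℕ} (A₂ : Matrix (Fin k) (Fin n) ℂ)
    (hA₂ : A₂.rank = k) (A₂d : Matrix (Fin n) (Fin k) ℂ) (hA₂d : IsMoorePenrose A₂ A₂d) :
    A₂ * A₂d = 1 := by
  have hsurj : ∀ y : Fin k → ℂ, ∃ z, A₂ *ᵥ z = y := by
    have h1 : LinearMap.range A₂.mulVecLin = ⊤ := by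
      apply Submodule.eq_top_of_finrank_eq
      rw [Module.finrank_fin_fun]
      exact hA₂
    intro y
    have : y ∈ LinearMap.range A₂.mulVecLin := h1 ▸ Submodule.mem_top
    obtain ⟨z, hz⟩ := this
    exact ⟨z, hz⟩
  ext i j
  obtain ⟨z, hz⟩ := hsurj (Pi.single j 1)
  have h2 : (A₂ * A₂d) *ᵥ Pi.single j 1 = Pi.single j 1 := by
    rw [← hz, Matrix.mulVec_mulVec, hA₂d.1]
  have h3 := congrFun h2 i
  simpa [Matrix.mulVec_single, Matrix.one_apply, Pi.single_apply, eq_comm] using h3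

set_option maxHeartbeats 1000000 in
/-- `ξ := A₁†b₁ + (I − (A₁(I − A₂†A₂))†A₁)(A₂†b₂ − A₁†b₁)` is a minimizer of
`‖A₁x − b₁‖²` subject to `A₂x = b₂`, and it has the smallest Euclidean norm among all such
minimizers. -/
theorem stmt18 {m n k : ℕ}
    (A₁ : Matrix (Fin m) (Fin n) ℂ) (b₁ : EuclideanSpace ℂ (Fin m))
    (A₂ : Matrix (Fin k) (Fin n) ℂ) (b₂ : EuclideanSpace ℂ (Fin k))
    (hk : 1 ≤ k) (hA₂ : A₂.rank = k)
    (A₁d : Matrix (Fin n) (Fin m) ℂ) (hA₁d : IsMoorePenrose A₁ A₁d)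
    (A₂d : Matrix (Fin n) (Fin k) ℂ) (hA₂d : IsMoorePenrose A₂ A₂d)
    (G : Matrix (Fin n) (Fin m) ℂ) (hG : IsMoorePenrose (A₁ * (1 - A₂d * A₂)) G)
    (ξ : EuclideanSpace ℂ (Fin n))
    (hξ : ξ = Matrix.toEuclideanLin A₁d b₁ +
      Matrix.toEuclideanLin (1 - G * A₁)
        (Matrix.toEuclideanLin A₂d b₂ - Matrix.toEuclideanLin A₁d b₁)) :
    Matrix.toEuclideanLin A₂ ξ = b₂ ∧
      (∀ x : EuclideanSpace ℂ (Fin n), Matrix.toEuclideanLin A₂ x = b₂ →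
        ‖Matrix.toEuclideanLin A₁ ξ - b₁‖ ^ 2 ≤ ‖Matrix.toEuclideanLin A₁ x - b₁‖ ^ 2) ∧
      ∀ x : EuclideanSpace ℂ (Fin n), Matrix.toEuclideanLin A₂ x = b₂ →
        (∀ y : EuclideanSpace ℂ (Fin n), Matrix.toEuclideanLin A₂ y = b₂ →
          ‖Matrix.toEuclideanLin A₁ x - b₁‖ ^ 2 ≤ ‖Matrix.toEuclideanLin A₁ y - b₁‖ ^ 2) →
        ‖ξ‖ ≤ ‖x‖ := by
  have hA₂A₂d : A₂ * A₂d = 1 := full_row_rank_right_inv A₂ hA₂ A₂d hA₂d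
  obtain ⟨a1, a2, a3, a4⟩ := hA₁d
  obtain ⟨c1, c2, c3, c4⟩ := hA₂d
  obtain ⟨B, hB⟩ : ∃ B', B' = A₁ * (1 - A₂d * A₂) := ⟨_, rfl⟩
  rw [← hB] at hG
  obtain ⟨g1, g2, g3, g4⟩ := hG
  -- basic matrix identities
  have hPH : (A₂d * A₂)ᴴ = A₂d * A₂ := c4
  have hPP : A₂d * A₂ * (A₂d * A₂) = A₂d * A₂ := by
    calc A₂d * A₂ * (A₂d * A₂) = A₂d * A₂ * A₂d * A₂ := by simp only [Matrix.mul_assoc]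
      _ = A₂d * A₂ := by rw [c2]
  have hBH : Bᴴ = (1 - A₂d * A₂) * A₁ᴴ := by
    rw [hB, Matrix.conjTranspose_mul, Matrix.conjTranspose_sub, Matrix.conjTranspose_one, hPH]
  have hA₂1P : A₂ * (1 - A₂d * A₂) = 0 := by
    rw [Matrix.mul_sub, Matrix.mul_one, ← Matrix.mul_assoc, c1, sub_self]
  have hP1P : A₂d * A₂ * (1 - A₂d * A₂) = 0 := by
    rw [Matrix.mul_sub, Matrix.mul_one, hPP, sub_self]
  -- G = Bᴴ * Gᴴ * G
  have hGeq : G = Bᴴ * Gᴴ * G := by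
    conv_lhs => rw [← g2]
    rw [← g4, Matrix.conjTranspose_mul]
  -- A₂ * G = 0
  have hA₂G : A₂ * G = 0 := by
    conv_lhs => rw [hGeq, hBH]
    calc A₂ * ((1 - A₂d * A₂) * A₁ᴴ * Gᴴ * G)
        = A₂ * (1 - A₂d * A₂) * (A₁ᴴ * Gᴴ * G) := by simp only [Matrix.mul_assoc]
      _ = 0 := by rw [hA₂1P, Matrix.zero_mul]
  -- (A₂d*A₂) * G = 0
  have hPG : A₂d * A₂ * G = 0 := by
    conv_lhs => rw [hGeq, hBH]
    calc A₂d * A₂ * ((1 - A₂d * A₂) * A₁ᴴ * Gᴴ * G)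
        = A₂d * A₂ * (1 - A₂d * A₂) * (A₁ᴴ * Gᴴ * G) := by simp only [Matrix.mul_assoc]
      _ = 0 := by rw [hP1P, Matrix.zero_mul]
  -- B * G = A₁ * G
  have h1PG : (1 - A₂d * A₂) * G = G := by
    rw [Matrix.sub_mul, Matrix.one_mul, hPG, sub_zero]
  have hA₁G : B * G = A₁ * G := by
    rw [hB, Matrix.mul_assoc, h1PG]
  -- G * A₁ * A₁d = G
  have hA₁' : A₁ᴴ * A₁ * A₁d = A₁ᴴ := by
    conv_lhs => rw [Matrix.mul_assoc, ← a3]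
    rw [← Matrix.conjTranspose_mul, a1]
  have hGG : G = G * Gᴴ * Bᴴ := by
    conv_lhs => rw [← g2]
    rw [Matrix.mul_assoc, ← g3, Matrix.conjTranspose_mul, ← Matrix.mul_assoc]
  have hGA : G * A₁ * A₁d = G := by
    conv_lhs => rw [hGG, hBH]
    calc G * Gᴴ * ((1 - A₂d * A₂) * A₁ᴴ) * A₁ * A₁d
        = G * Gᴴ * (1 - A₂d * A₂) * (A₁ᴴ * A₁ * A₁d) := by simp only [Matrix.mul_assoc]
      _ = G * Gᴴ * (1 - A₂d * A₂) * A₁ᴴ := by rw [hA₁']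
      _ = G * Gᴴ * ((1 - A₂d * A₂) * A₁ᴴ) := by simp only [Matrix.mul_assoc]
      _ = G := by rw [← hBH, ← hGG]
  -- Bᴴ * B * G = Bᴴ
  have hBhBG : Bᴴ * B * G = Bᴴ := by
    conv_rhs => rw [← g1]
    rw [Matrix.conjTranspose_mul, g3, ← Matrix.mul_assoc]
  -- vector-level setup
  obtain ⟨c, hc⟩ : ∃ c', c' = b₁ - mve (A₁ * A₂d) b₂ := ⟨_, rfl⟩
  have hξ' : ξ = mve A₂d b₂ + mve G c := by
    rw [hξ]
    have e1 : mve G (mve A₁ (mve A₁d b₁)) = mve G b₁ := by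
      rw [← mve_mul, ← mve_mul, hGA]
    simp only [tEL, sub_mve, mve_one, mve_sub, mve_add, mve_mul, hc]
    rw [e1]
    abel
  have hA₂ξ : Matrix.toEuclideanLin A₂ ξ = b₂ := by
    rw [tEL, hξ', mve_add, ← mve_mul, ← mve_mul, hA₂A₂d, hA₂G, mve_one, mve_zero, add_zero]
  -- residual formulas
  have key : ∀ x : EuclideanSpace ℂ (Fin n), Matrix.toEuclideanLin A₂ x = b₂ →
      Matrix.toEuclideanLin A₁ x - b₁ = mve B (x - mve A₂d b₂) - c := by
    intro x hx
    have hx' : mve A₂ x = b₂ := hx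
    have hw : mve (A₂d * A₂) (x - mve A₂d b₂) = 0 := by
      rw [mve_mul, mve_sub, hx', ← mve_mul, hA₂A₂d, mve_one, sub_self, mve_v_zero]
    have hbw : mve B (x - mve A₂d b₂) = mve A₁ (x - mve A₂d b₂) := by
      rw [hB, mve_mul, sub_mve, mve_one, hw, sub_zero]
    rw [tEL, hbw, mve_sub, hc, mve_mul]
    abel
  have hξdiff : Matrix.toEuclideanLin A₁ ξ - b₁ = mve B (mve G c) - c := by
    have e2 : mve B (mve G c) = mve A₁ (mve G c) := by
      rw [← mve_mul, ← mve_mul, hA₁G]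
    rw [tEL, hξ', mve_add, e2, hc, mve_mul]
    abel
  -- Pythagoras
  have pyth : ∀ u : EuclideanSpace ℂ (Fin n),
      ‖mve B u - c‖ ^ 2 = ‖mve B (u - mve G c)‖ ^ 2 + ‖mve B (mve G c) - c‖ ^ 2 := by
    intro u
    have hsplit : mve B u - c = mve B (u - mve G c) + (mve B (mve G c) - c) := by
      rw [mve_sub]; abel
    have h0 : ⟪mve B (u - mve G c), mve B (mve G c) - c⟫_ℂ = 0 := by
      rw [inner_mve]
      have hz : mve Bᴴ (mve B (mve G c) - c) = 0 := by
        rw [mve_sub, ← mve_mul, ← mve_mul, hBhBG, sub_self]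
      rw [hz, inner_zero_right]
    rw [hsplit, pow_two, pow_two, pow_two]
    exact norm_add_sq_eq_norm_sq_add_norm_sq_of_inner_eq_zero _ _ h0
  refine ⟨hA₂ξ, ?_, ?_⟩
  · intro x hx
    rw [hξdiff, key x hx, pyth (x - mve A₂d b₂)]
    exact le_add_of_nonneg_left (by positivity)
  · intro x hx hmin
    have h1 : ‖Matrix.toEuclideanLin A₁ x - b₁‖ ^ 2 ≤ ‖Matrix.toEuclideanLin A₁ ξ - b₁‖ ^ 2 :=
      hmin ξ hA₂ξ
    rw [hξdiff, key x hx, pyth (x - mve A₂d b₂)] at h1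
    have hBv : mve B (x - mve A₂d b₂ - mve G c) = 0 := by
      have h4 : ‖mve B (x - mve A₂d b₂ - mve G c)‖ ^ 2 ≤ 0 := by linarith
      have h5 : ‖mve B (x - mve A₂d b₂ - mve G c)‖ ^ 2 = 0 :=
        le_antisymm h4 (by positivity)
      have h3 : ‖mve B (x - mve A₂d b₂ - mve G c)‖ = 0 := by
        exact pow_eq_zero_iff two_ne_zero |>.mp h5
      exact norm_eq_zero.mp h3
    obtain ⟨v, hv⟩ : ∃ v', v' = x - mve A₂d b₂ - mve G c := ⟨_, rfl⟩
    rw [← hv] at hBv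
    have hxv : x = ξ + v := by rw [hξ', hv]; abel
    have hA₂v : mve A₂ v = 0 := by
      have hx' : mve A₂ x = b₂ := hx
      rw [hv, mve_sub, mve_sub, hx', ← mve_mul, ← mve_mul, hA₂A₂d, hA₂G, mve_one, mve_zero]
      abel
    have hinner : ⟪ξ, v⟫_ℂ = 0 := by
      rw [hξ', inner_add_left]
      have t1 : ⟪mve A₂d b₂, v⟫_ℂ = 0 := by
        have e : mve A₂d b₂ = mve (A₂d * A₂) (mve A₂d b₂) := by
          conv_lhs => rw [← c2]
          rw [mve_mul]
        rw [e, inner_mve, hPH, mve_mul, hA₂v, mve_v_zero, inner_zero_right]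
      have t2 : ⟪mve G c, v⟫_ℂ = 0 := by
        have e : mve G c = mve (G * B) (mve G c) := by
          conv_lhs => rw [← g2]
          rw [mve_mul]
        rw [e, inner_mve, g4, mve_mul, hBv, mve_v_zero, inner_zero_right]
      rw [t1, t2, add_zero]
    have hnorm : ‖x‖ ^ 2 = ‖ξ‖ ^ 2 + ‖v‖ ^ 2 := by
      rw [hxv, pow_two, pow_two, pow_two]
      exact norm_add_sq_eq_norm_sq_add_norm_sq_of_inner_eq_zero _ _ hinner
    have hle : ‖ξ‖ ^ 2 ≤ ‖x‖ ^ 2 := by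
      have : (0:ℝ) ≤ ‖v‖ ^ 2 := by positivity
      linarith
    nlinarith [norm_nonneg x, norm_nonneg ξ]
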